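/- arXiv:2411.12696 — 12 statements merged into one kernel-verified Lean document; each statement's English description precedes it below -/
import Mathlib

section
/- An allocation A is weighted-envy-freeable (WEF-able) — i.e., there exists a nonnegative subsidy vector s such that (v_i(A_i)+s_i)/w_i ≥ (v_i(A_j)+s_j)/w_j for all agents i,j — if and only if the weighted envy graph G_{A,w} contains no directed cycle of positive total cost, where the cost of edge (i,j) is v_i(A_j)/w_j - v_i(A_i)/w_i. -/
/-- Sum of edge costs along the consecutive pairs of a list (a directed path). -/
noncomputable def pathCost {n : ℕ} (c : Fin n → Fin n → ℝ) (p : List (Fin n)) : ℝ :=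
  ((p.zip p.tail).map fun q => c q.1 q.2).sum

/-- Sum of edge costs along a cycle `i₁,…,i_r,i₁`. -/
noncomputable def cycleCost {n : ℕ} (c : Fin n → Fin n → ℝ) (p : List (Fin n)) : ℝ :=
  ((p.zip (p.rotate 1)).map fun q => c q.1 q.2).sum

/-- Weighted envy edge cost without subsidies. -/
noncomputable def envyCost {n : ℕ} (v : Fin n → Fin n → ℝ) (w : Fin n → ℝ) (i j : Fin n) : ℝ :=
  v i j / w j - v i i / w i

/-- Weighted envy edge cost with subsidy vector `s`. -/
noncomputable def envyCostS {n : ℕ} (v : Fin n → Fin n → ℝ) (w : Fin n → ℝ) (s : Fin n → ℝ)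
    (i j : Fin n) : ℝ :=
  (v i j + s j) / w j - (v i i + s i) / w i

/-- `(A,s)` is weighted-envy-free. -/
def IsWEF {n : ℕ} (v : Fin n → Fin n → ℝ) (w : Fin n → ℝ) (s : Fin n → ℝ) : Prop :=
  ∀ i j, (v i j + s j) / w j ≤ (v i i + s i) / w i

/-- The set of costs of (vertex-distinct) directed paths starting at `i`. -/
noncomputable def pathCostsFrom {n : ℕ} (c : Fin n → Fin n → ℝ) (i : Fin n) : Set ℝ :=
  {x | ∃ p : List (Fin n), p ≠ [] ∧ p.Nodup ∧ p.head? = some i ∧ pathCost c p = x}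

private lemma list_sum_nonpos : ∀ (l : List ℝ), (∀ x ∈ l, x ≤ 0) → l.sum ≤ 0
  | [], _ => by simp
  | x :: t, h => by
    simp only [List.sum_cons]
    have := list_sum_nonpos t (fun y hy => h y (List.mem_cons_of_mem _ hy))
    have := h x List.mem_cons_self
    linarith

private lemma sum_map_add {α : Type*} (l : List α) (f g : α → ℝ) :
    (l.map fun x => f x + g x).sum = (l.map f).sum + (l.map g).sum := by
  induction l with
  | nil => simp
  | cons x t ih => simp [ih]; ring

private lemma sum_map_sub {α : Type*} (l : List α) (f g : α → ℝ) :
    (l.map fun x => f x - g x).sum = (l.map f).sum - (l.map g).sum := by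
  induction l with
  | nil => simp
  | cons x t ih => simp [ih]; ring

private lemma pathCost_cons {n : ℕ} (c : Fin n → Fin n → ℝ) (y : Fin n) (l : List (Fin n)) :
    pathCost c (y :: l) = l.head?.elim 0 (c y) + pathCost c l := by
  cases l <;> simp [pathCost]

private lemma pathCost_singleton {n : ℕ} (c : Fin n → Fin n → ℝ) (x : Fin n) :
    pathCost c [x] = 0 := by simp [pathCost]

private lemma pathCost_append {n : ℕ} (c : Fin n → Fin n → ℝ) (x : Fin n) :
    ∀ (a b : List (Fin n)),
    pathCost c (a ++ x :: b) = pathCost c (a ++ [x]) + pathCost c (x :: b)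
  | [], b => by simp [pathCost_singleton]
  | y :: a, b => by
    have h1 : pathCost c ((y :: a) ++ x :: b) = (a ++ x :: b).head?.elim 0 (c y)
        + pathCost c (a ++ x :: b) := by
      simpa using pathCost_cons c y (a ++ x :: b)
    have h2 : pathCost c ((y :: a) ++ [x]) = (a ++ [x]).head?.elim 0 (c y)
        + pathCost c (a ++ [x]) := by
      simpa using pathCost_cons c y (a ++ [x])
    have h3 : (a ++ x :: b).head? = (a ++ [x]).head? := by cases a <;> simp
    rw [h1, h2, h3, pathCost_append c x a b]
    ring

private lemma cycleCost_eq {n : ℕ} (c : Fin n → Fin n → ℝ) (x : Fin n) (l : List (Fin n)) :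
    cycleCost c (x :: l) = pathCost c (x :: (l ++ [x])) := by
  have hrot : (x :: l).rotate 1 = l ++ [x] := by
    rw [List.rotate_cons_succ, List.rotate_zero]
  have hzip : (x :: (l ++ [x])).zip (l ++ [x]) = (x :: l).zip (l ++ [x]) := by
    have h : ((x :: l) ++ [x]).zip ((l ++ [x]) ++ ([] : List (Fin n)))
        = (x :: l).zip (l ++ [x]) ++ ([x].zip ([] : List (Fin n))) :=
      List.zip_append (by simp)
    simpa using h
  simp only [cycleCost, pathCost, hrot, List.tail_cons, hzip]

/-- An allocation is WEF-able iff its weighted envy graph has no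
positive-cost directed cycle. -/
theorem wefable_iff_no_positive_cycle {n : ℕ} (w : Fin n → ℝ) (hw : ∀ i, 0 < w i)
    (v : Fin n → Fin n → ℝ) (hv : ∀ i j, 0 ≤ v i j) :
    (∃ s : Fin n → ℝ, (∀ i, 0 ≤ s i) ∧ IsWEF v w s) ↔
      (∀ c : List (Fin n), c ≠ [] → cycleCost (envyCost v w) c ≤ 0) := by
  have hwne : ∀ i, w i ≠ 0 := fun i => (hw i).ne'
  constructor
  · rintro ⟨s, hs0, hW⟩ p hp
    set g : Fin n → ℝ := fun x => s x / w x with hg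
    have hlen : (p.rotate 1).length = p.length := List.length_rotate p 1
    have hfst : ((p.zip (p.rotate 1)).map fun q => g q.1) = p.map g := by
      rw [show (fun q : Fin n × Fin n => g q.1) = g ∘ Prod.fst from rfl, ← List.map_map,
        List.map_fst_zip hlen.ge]
    have hsnd : ((p.zip (p.rotate 1)).map fun q => g q.2) = (p.rotate 1).map g := by
      rw [show (fun q : Fin n × Fin n => g q.2) = g ∘ Prod.snd from rfl, ← List.map_map,
        List.map_snd_zip hlen.le]
    have key : cycleCost (envyCost v w) p
        = cycleCost (envyCostS v w s) p
          + (((p.zip (p.rotate 1)).map fun q => g q.1).sum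
            - ((p.zip (p.rotate 1)).map fun q => g q.2).sum) := by
      simp only [cycleCost]
      rw [show (fun q : Fin n × Fin n => envyCost v w q.1 q.2)
          = fun q : Fin n × Fin n => envyCostS v w s q.1 q.2 + (g q.1 - g q.2) from
        funext fun q => by simp only [envyCost, envyCostS, hg, add_div]; ring]
      rw [sum_map_add, sum_map_sub]
    have hrotsum : ((p.rotate 1).map g).sum = (p.map g).sum :=
      ((List.rotate_perm p 1).map g).sum_eq
    have hle : cycleCost (envyCostS v w s) p ≤ 0 := by
      apply list_sum_nonpos
      intro x hx
      obtain ⟨q, _, rfl⟩ := List.mem_map.1 hx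
      exact sub_nonpos.2 (hW q.1 q.2)
    rw [key, hfst, hsnd, hrotsum]
    linarith
  · intro hcyc
    set c := envyCost v w with hc
    have hfin : ∀ i, (pathCostsFrom c i).Finite := by
      intro i
      apply Set.Finite.subset ((List.finite_length_le (Fin n) n).image (pathCost c))
      rintro x ⟨p, -, hnd, -, rfl⟩
      exact ⟨p, by simpa using hnd.length_le_card, rfl⟩
    have hne : ∀ i, (pathCostsFrom c i).Nonempty := by
      intro i
      exact ⟨0, [i], by simp, by simp, by simp, pathCost_singleton c i⟩
    set S : Fin n → ℝ := fun i => sSup (pathCostsFrom c i) with hS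
    have hub : ∀ i x, x ∈ pathCostsFrom c i → x ≤ S i := fun i x hx =>
      le_csSup (hfin i).bddAbove hx
    have hmem : ∀ i, S i ∈ pathCostsFrom c i := fun i => (hne i).csSup_mem (hfin i)
    have hS0 : ∀ i, 0 ≤ S i := fun i =>
      hub i 0 ⟨[i], by simp, by simp, by simp, pathCost_singleton c i⟩
    have key : ∀ i j, c i j + S j ≤ S i := by
      intro i j
      obtain ⟨p, hpne, hnd, hhead, hpc⟩ := hmem j
      by_cases hi : i ∈ p
      · obtain ⟨a, b, rfl⟩ := List.append_of_mem hi
        have hndb : (i :: b).Nodup := hnd.of_append_right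
        have hb : pathCost c (i :: b) ≤ S i :=
          hub i _ ⟨i :: b, by simp, hndb, by simp, rfl⟩
        cases a with
        | nil =>
          have hij : i = j := by simpa using hhead
          subst hij
          have h1 : cycleCost c [i] ≤ 0 := hcyc [i] (by simp)
          have h2 : cycleCost c [i] = c i i := by
            rw [cycleCost_eq, pathCost_cons]
            simp [pathCost_singleton]
          simp only [List.nil_append] at hpc
          rw [h2] at h1
          linarith
        | cons j' a' =>
          have hj' : j' = j := by simpa using hhead
          have h1 : cycleCost c (i :: j' :: a') ≤ 0 := hcyc _ (by simp)
          have h2 : cycleCost c (i :: j' :: a') = c i j' + pathCost c ((j' :: a') ++ [i]) := by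
            rw [cycleCost_eq, pathCost_cons]
            simp
          have h3 : pathCost c ((j' :: a') ++ i :: b)
              = pathCost c ((j' :: a') ++ [i]) + pathCost c (i :: b) :=
            pathCost_append c i _ _
          rw [hj'] at h1 h2 h3 hpc
          rw [h3] at hpc
          rw [h2] at h1
          linarith
      · obtain ⟨t, rfl⟩ : ∃ t, p = j :: t := by
          cases p with
          | nil => exact absurd rfl hpne
          | cons y t =>
            have : y = j := by simpa using hhead
            exact ⟨t, by rw [this]⟩
        have : pathCost c (i :: j :: t) ≤ S i := by
          apply hub i
          refine ⟨i :: j :: t, by simp, ?_, by simp, rfl⟩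
          exact List.nodup_cons.2 ⟨hi, hnd⟩
        rw [pathCost_cons] at this
        simp only [List.head?_cons, Option.elim_some] at this
        linarith [hpc ▸ this]
    refine ⟨fun i => w i * S i, fun i => mul_nonneg (hw i).le (hS0 i), ?_⟩
    intro i j
    have h1 : (v i j + w j * S j) / w j = v i j / w j + S j := by
      rw [add_div, mul_div_cancel_left₀ _ (hwne j)]
    have h2 : (v i i + w i * S i) / w i = v i i / w i + S i := by
      rw [add_div, mul_div_cancel_left₀ _ (hwne i)]
    rw [h1, h2]
    have := key i j
    simp only [hc, envyCost] at this
    linarith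
end

section
/- If the weighted envy graph of allocation A has no positive-cost cycles, then setting s_i = w_i · ℓ_i(A), where ℓ_i(A) is the maximum cost of a directed path starting at agent i, yields a nonnegative subsidy vector making (A,s) weighted-envy-free. -/
/-- Recursive cost of a walk starting at `x` through `l`. -/
noncomputable def chain {n : ℕ} (c : Fin n → Fin n → ℝ) : Fin n → List (Fin n) → ℝ
  | _, [] => 0
  | x, y :: l => c x y + chain c y l

lemma pathCost_eq_chain {n : ℕ} (c : Fin n → Fin n → ℝ) :
    ∀ (l : List (Fin n)) (x : Fin n), pathCost c (x :: l) = chain c x l := by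
  intro l
  induction l with
  | nil => intro x; simp [pathCost, chain]
  | cons y l ih => intro x; simp [pathCost, chain] at *; simp [ih y]

lemma chain_append {n : ℕ} (c : Fin n → Fin n → ℝ) :
    ∀ (a : List (Fin n)) (x y : Fin n) (b : List (Fin n)),
      chain c x (a ++ y :: b) = chain c x (a ++ [y]) + chain c y b := by
  intro a
  induction a with
  | nil => intro x y b; simp [chain]
  | cons z a ih => intro x y b; simp [chain, ih z y b, add_assoc]

lemma cycleCost_eq_chain {n : ℕ} (c : Fin n → Fin n → ℝ) :
    ∀ (l : List (Fin n)) (x : Fin n), cycleCost c (x :: l) = chain c x (l ++ [x]) := by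
  have key : ∀ (l : List (Fin n)) (x z : Fin n),
      (((x :: l).zip (l ++ [z])).map fun q => c q.1 q.2).sum = chain c x (l ++ [z]) := by
    intro l
    induction l with
    | nil => intro x z; simp [chain]
    | cons y l ih => intro x z; simp [chain, ih y z]
  intro l x
  have hrot : (x :: l).rotate 1 = l ++ [x] := by
    simp [List.rotate_cons_succ, List.rotate_zero]
  rw [cycleCost, hrot, key]

section mainAux
variable {n : ℕ} (w : Fin n → ℝ) (v : Fin n → Fin n → ℝ)

lemma ell_nonneg (ℓ : Fin n → ℝ)
    (hℓ : ∀ i, IsGreatest (pathCostsFrom (envyCost v w) i) (ℓ i)) (i : Fin n) : 0 ≤ ℓ i := by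
  refine (hℓ i).2 ⟨[i], by simp, by simp, by simp, ?_⟩
  simp [pathCost]

lemma key_ineq (hcyc : ∀ c : List (Fin n), c ≠ [] → cycleCost (envyCost v w) c ≤ 0)
    (ℓ : Fin n → ℝ) (hℓ : ∀ i, IsGreatest (pathCostsFrom (envyCost v w) i) (ℓ i))
    (i j : Fin n) : envyCost v w i j + ℓ j ≤ ℓ i := by
  set c := envyCost v w with hc
  obtain ⟨p, hpne, hpnd, hphd, hpc⟩ := (hℓ j).1
  obtain ⟨x, p', rfl⟩ := List.exists_cons_of_ne_nil hpne
  obtain rfl : j = x := by simpa using hphd.symm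
  by_cases hij : i = j
  · have h0 : c i j = 0 := by simp [hc, envyCost, hij]
    rw [hij] at h0 ⊢; rw [h0]; linarith
  by_cases hip : i ∈ p'
  · obtain ⟨p₁', p₂, hp⟩ := List.append_of_mem hip
    have hnd2 : (i :: p₂).Nodup := by
      have hs : (i :: p₂).Sublist (j :: p') := by
        rw [hp]
        exact (List.sublist_append_right p₁' (i :: p₂)).cons _
      exact hs.nodup hpnd
    have h2 : pathCost c (i :: p₂) ≤ ℓ i :=
      (hℓ i).2 ⟨i :: p₂, by simp, hnd2, by simp, rfl⟩
    have h1 : ℓ j = chain c j (p₁' ++ [i]) + chain c i p₂ := by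
      rw [← hpc, hp, pathCost_eq_chain, chain_append]
    have hcy : cycleCost c (i :: j :: p₁') ≤ 0 := hcyc _ (by simp)
    have hcy' : cycleCost c (i :: j :: p₁') = c i j + chain c j (p₁' ++ [i]) := by
      rw [cycleCost_eq_chain]; simp [chain]
    have h3 : pathCost c (i :: p₂) = chain c i p₂ := pathCost_eq_chain c p₂ i
    linarith
  · have hnd2 : (i :: j :: p').Nodup := by
      simp_all
    have h2 : pathCost c (i :: j :: p') ≤ ℓ i :=
      (hℓ i).2 ⟨i :: j :: p', by simp, hnd2, by simp, rfl⟩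
    have h3 : pathCost c (i :: j :: p') = c i j + pathCost c (j :: p') := by
      rw [pathCost_eq_chain, pathCost_eq_chain]; simp [chain]
    rw [h3, hpc] at h2
    linarith

end mainAux

/-- If there is no positive-cost cycle, then the subsidies
`s i = w i * ℓ i` (with `ℓ i` the max cost of a path starting at `i`)
are nonnegative and make the allocation weighted-envy-free. -/
theorem max_path_subsidy_is_WEF {n : ℕ} (w : Fin n → ℝ) (hw : ∀ i, 0 < w i)
    (v : Fin n → Fin n → ℝ) (hv : ∀ i j, 0 ≤ v i j)
    (hcyc : ∀ c : List (Fin n), c ≠ [] → cycleCost (envyCost v w) c ≤ 0)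
    (ℓ : Fin n → ℝ) (hℓ : ∀ i, IsGreatest (pathCostsFrom (envyCost v w) i) (ℓ i)) :
    (∀ i, 0 ≤ w i * ℓ i) ∧ IsWEF v w (fun i => w i * ℓ i) := by
  refine ⟨fun i => mul_nonneg (hw i).le (ell_nonneg w v ℓ hℓ i), fun i j => ?_⟩
  have key := key_ineq w v hcyc ℓ hℓ i j
  have e1 : (v i j + w j * ℓ j) / w j = v i j / w j + ℓ j := by
    rw [add_div, mul_div_cancel_left₀ _ (hw j).ne']
  have e2 : (v i i + w i * ℓ i) / w i = v i i / w i + ℓ i := by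
    rw [add_div, mul_div_cancel_left₀ _ (hw i).ne']
  simp only at e1 e2 ⊢
  rw [e1, e2]
  simp only [envyCost] at key
  linarith
end

section
/- The subsidy vector s*_i = w_i · ℓ_i(A) is pointwise minimal: for any WEF-able allocation A and any nonnegative subsidy vector s such that (A,s) is weighted-envy-free, s_i ≥ w_i · ℓ_i(A) for every agent i, where ℓ_i(A) is the maximum cost of a path starting at i in the weighted envy graph. -/
/-- The subsidy vector `s* i = w i * ℓ i` is pointwise minimal among all
nonnegative weighted-envy-eliminating subsidy vectors. -/
theorem max_path_subsidy_is_minimal {n : ℕ} (w : Fin n → ℝ) (hw : ∀ i, 0 < w i)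
    (v : Fin n → Fin n → ℝ) (hv : ∀ i j, 0 ≤ v i j)
    (ℓ : Fin n → ℝ) (hℓ : ∀ i, IsGreatest (pathCostsFrom (envyCost v w) i) (ℓ i))
    (s : Fin n → ℝ) (hs : ∀ i, 0 ≤ s i) (hWEF : IsWEF v w s) :
    ∀ i, w i * ℓ i ≤ s i := by
  have hedge : ∀ i j, envyCost v w i j ≤ s i / w i - s j / w j := by
    intro i j
    have h := hWEF i j
    rw [add_div, add_div] at h
    simp only [envyCost]
    linarith
  have key : ∀ (p : List (Fin n)) (a : Fin n),
      pathCost (envyCost v w) (a :: p) ≤ s a / w a - s ((a :: p).getLast (by simp)) / w ((a :: p).getLast (by simp)) := by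
    intro p
    induction p with
    | nil => intro a; simp [pathCost]
    | cons b rest ih =>
      intro a
      have h1 : pathCost (envyCost v w) (a :: b :: rest)
          = envyCost v w a b + pathCost (envyCost v w) (b :: rest) := by
        simp [pathCost]
      have h2 := ih b
      have h3 := hedge a b
      have h4 : (a :: b :: rest).getLast (by simp) = (b :: rest).getLast (by simp) := by
        simp [List.getLast_cons]
      rw [h1, h4]
      linarith
  intro i
  obtain ⟨_, hub⟩ := hℓ i
  obtain ⟨hmem, -⟩ := hℓ i
  obtain ⟨p, hne, hnd, hhd, hpc⟩ := hmem
  obtain ⟨a, rest, rfl⟩ : ∃ a rest, p = a :: rest := by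
    cases p with
    | nil => exact absurd rfl hne
    | cons a rest => exact ⟨a, rest, rfl⟩
  have ha : a = i := by simpa using hhd
  subst ha
  have hk := key rest a
  set t := (a :: rest).getLast (by simp)
  have hst : 0 ≤ s t / w t := div_nonneg (hs t) (hw t).le
  have : ℓ a ≤ s a / w a := by rw [← hpc]; linarith
  calc w a * ℓ a ≤ w a * (s a / w a) := by
        exact mul_le_mul_of_nonneg_left this (hw a).le
    _ = s a := by rw [mul_comm, div_mul_cancel₀ _ (hw a).ne']
end

section
/- With two agents having weights w_1 = 1 and w_2 = 10, two items o_1, o_2 with valuations v_1(o_1)=5, v_1(o_2)=7, v_2(o_1)=10, v_2(o_2)=8, neither assignment of the two singleton bundles to the two agents is weighted-envy-freeable: under any assignment, no subsidy vector s ≥ 0 makes the allocation weighted-envy-free. -/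
/-- With weights (1,10) and bundle values ![![5,7],![10,8]], neither assignment
of the two singleton bundles to the two agents is WEF-able. -/
theorem no_permutation_is_wefable :
    ∀ σ : Equiv.Perm (Fin 2),
      ¬ ∃ s : Fin 2 → ℝ, (∀ i, 0 ≤ s i) ∧
        IsWEF (fun i j => (![![(5 : ℝ), 7], ![10, 8]]) i (σ j)) ![(1 : ℝ), 10] s := by
  intro σ
  rintro ⟨s, _, h⟩
  have h01 := h 0 1
  have h10 := h 1 0
  have hne := σ.injective.ne (by decide : (0:Fin 2) ≠ 1)
  simp only [Matrix.cons_val_zero, Matrix.cons_val_one, Matrix.head_cons] at h01 h10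
  rcases Fin.exists_fin_two.mp ⟨σ 0, rfl⟩ with h0 | h0 <;>
    rcases Fin.exists_fin_two.mp ⟨σ 1, rfl⟩ with h1 | h1 <;>
    rw [h0, h1] at h01 h10 hne <;> first
      | exact hne rfl
      | (simp only [Matrix.cons_val_zero, Matrix.cons_val_one, Matrix.head_cons] at h01 h10;
         linarith)
end

section
/- For any WEF-able allocation A of m items, every directed path P in the weighted envy graph has cost at most mV/w_1, where V is the maximum single-item value over agents and items, w_1 = min_i w_i, and hence the total minimal subsidy Σ_i w_i ℓ_i(A) is at most (W/w_1 − 1)·m·V, where W = Σ_i w_i. -/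
variable {n : ℕ} (c : Fin n → Fin n → ℝ)

lemma pc_nil : pathCost c [] = 0 := by simp [pathCost]

lemma pc_single (a : Fin n) : pathCost c [a] = 0 := by simp [pathCost]

lemma pc_cons2 (a b : Fin n) (t : List (Fin n)) :
    pathCost c (a :: b :: t) = c a b + pathCost c (b :: t) := by
  simp [pathCost]

lemma pc_glue (p : List (Fin n)) (x : Fin n) (q : List (Fin n)) :
    pathCost c (p ++ x :: q) = pathCost c (p ++ [x]) + pathCost c (x :: q) := by
  induction p with
  | nil => simp [pc_single]
  | cons a p ih =>
    cases p with
    | nil => simp [pc_cons2, pc_single]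
    | cons b t =>
      simp only [List.cons_append, pc_cons2] at *
      rw [ih]; ring

lemma pc_snoc (p : List (Fin n)) (hp : p ≠ []) (x : Fin n) :
    pathCost c (p ++ [x]) = pathCost c p + c (p.getLast hp) x := by
  induction p with
  | nil => simp at hp
  | cons a p ih =>
    cases p with
    | nil => simp [pc_cons2, pc_single, pc_nil]
    | cons b t =>
      simp only [List.cons_append, pc_cons2]
      rw [← List.cons_append, ih (by simp)]
      simp [List.getLast]
      ring

lemma zip_snoc_left (l₁ l₂ : List (Fin n)) (x : Fin n) (h : l₁.length = l₂.length) :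
    (l₁ ++ [x]).zip l₂ = l₁.zip l₂ := by
  have := List.zip_append (l₁ := l₁) (l₂ := l₂) (r₁ := [x]) (r₂ := ([] : List (Fin n))) h
  simpa using this

lemma cycle_eq (p : List (Fin n)) (hp : p ≠ []) :
    cycleCost c p = pathCost c (p ++ [p.head hp]) := by
  obtain ⟨a, t, rfl⟩ := List.exists_cons_of_ne_nil hp
  simp only [List.head_cons, cycleCost, pathCost]
  have hrot : (a :: t).rotate 1 = t ++ [a] := by
    simpa using List.rotate_cons_succ t a 0
  have htail : ((a :: t) ++ [a]).tail = t ++ [a] := by simp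
  rw [hrot, htail]
  congr 1
  rw [show (a :: t) ++ [a] = (a :: t) ++ [a] from rfl]
  rw [zip_snoc_left (a :: t) (t ++ [a]) a (by simp)]

lemma exists_ell_le_zero {n : ℕ} (c : Fin (n+1) → Fin (n+1) → ℝ)
    (hcyc : ∀ p : List (Fin (n+1)), p ≠ [] → cycleCost c p ≤ 0)
    (ℓ : Fin (n+1) → ℝ)
    (hℓ : ∀ i, IsGreatest (pathCostsFrom c i) (ℓ i)) :
    ∃ i, ℓ i ≤ 0 := by
  by_contra hcon
  push_neg at hcon
  have hch : ∀ i, ∃ p : List (Fin (n+1)),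
      p ≠ [] ∧ p.Nodup ∧ p.head? = some i ∧ pathCost c p = ℓ i := fun i => (hℓ i).1
  choose p hne hnd hhd hcost using hch
  have hpos : ∀ i, 0 < pathCost c (p i) := fun i => (hcost i) ▸ hcon i
  have hlen : ∀ i, 2 ≤ (p i).length := by
    intro i
    by_contra hl
    push_neg at hl
    have h1 : (p i).length = 1 := by
      have := List.length_pos_iff.mpr (hne i)
      omega
    obtain ⟨a, ha⟩ := List.length_eq_one_iff.mp h1
    have := hpos i
    rw [ha, pc_single] at this
    exact lt_irrefl _ this
  set e : Fin (n+1) → Fin (n+1) := fun i => (p i).getLast (hne i) with he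
  set g : ℕ → Fin (n+1) := fun k => e^[k] 0 with hg
  have hgsucc : ∀ k, g (k+1) = e (g k) := fun k => Function.iterate_succ_apply' e k 0
  -- decomposition of each path
  have hdec : ∀ i, ∃ t : List (Fin (n+1)), t ≠ [] ∧ p i = i :: t ∧ t.getLast? = some (e i) := by
    intro i
    obtain ⟨t, ht⟩ := List.head?_eq_some_iff.mp (hhd i)
    have hne' : t ≠ [] := by
      intro h; rw [h] at ht; have := hlen i; rw [ht] at this; simp at this
    refine ⟨t, hne', ht, ?_⟩
    have h2 : (p i).getLast? = some (e i) := List.getLast?_eq_getLast (hne i)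
    rw [ht, List.getLast?_cons, List.getLast?_eq_getLast hne'] at h2
    simp only [Option.getD_some] at h2
    rw [List.getLast?_eq_getLast hne', h2]
  have walk : ∀ d, 1 ≤ d → ∀ k, ∃ q : List (Fin (n+1)),
      2 ≤ q.length ∧ q.head? = some (g k) ∧ q.getLast? = some (g (k+d)) ∧
      0 < pathCost c q := by
    intro d hd
    induction d, hd using Nat.le_induction with
    | base =>
      intro k
      refine ⟨p (g k), hlen _, hhd _, ?_, hpos _⟩
      rw [hgsucc k]
      exact List.getLast?_eq_getLast (hne _)
    | succ d hd IH =>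
      intro k
      obtain ⟨q, hq1, hq2, hq3, hq4⟩ := IH k
      set x := g (k+d) with hx
      obtain ⟨t, ht1, ht2, ht3⟩ := hdec x
      have hqne : q ≠ [] := List.ne_nil_of_length_pos (by omega)
      have hql : q.getLast hqne = x := by
        have h5 := List.getLast?_eq_getLast hqne
        rw [hq3] at h5
        exact (Option.some_inj.mp h5).symm
      have hqdec : q.dropLast ++ [x] = q := by
        rw [← hql]; exact List.dropLast_append_getLast hqne
      refine ⟨q.dropLast ++ (x :: t), ?_, ?_, ?_, ?_⟩
      · have h6 : q.dropLast ++ (x :: t) = q ++ t := by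
          rw [← hqdec]; simp
        rw [h6]; simp; omega
      · have h6 : q.dropLast ++ (x :: t) = q ++ t := by
          rw [← hqdec]; simp
        rw [h6, List.head?_append, hq2]; rfl
      · rw [List.getLast?_append]
        have h7 : (x :: t).getLast? = some (e x) := by
          rw [List.getLast?_cons, List.getLast?_eq_getLast ht1]
          simp only [Option.getD_some]
          have h9 := List.getLast?_eq_getLast ht1
          rw [h9] at ht3
          rw [Option.some_inj.mp ht3]
        rw [h7]
        have h8 : k + (d + 1) = (k + d) + 1 := rfl
        rw [h8, hgsucc (k+d)]
        rfl
      · rw [pc_glue, hqdec, ← ht2]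
        have := hpos x
        linarith
  obtain ⟨k0, l0, hkl, hgeq⟩ := Finite.exists_ne_map_eq_of_infinite g
  obtain ⟨k, l, hlt, hge⟩ : ∃ k l, k < l ∧ g k = g l := by
    rcases lt_or_gt_of_ne hkl with h | h
    exacts [⟨k0, l0, h, hgeq⟩, ⟨l0, k0, h, hgeq.symm⟩]
  obtain ⟨q, hq1, hq2, hq3, hq4⟩ := walk (l - k) (by omega) k
  rw [show k + (l - k) = l from by omega, ← hge] at hq3
  have hqne : q ≠ [] := List.ne_nil_of_length_pos (by omega)
  have hql : q.getLast hqne = g k := by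
    have h5 := List.getLast?_eq_getLast hqne
    rw [hq3] at h5
    exact (Option.some_inj.mp h5).symm
  have hqdec : q.dropLast ++ [g k] = q := by
    rw [← hql]; exact List.dropLast_append_getLast hqne
  have hrne : q.dropLast ≠ [] := by
    intro h
    rw [h] at hqdec
    rw [← hqdec] at hq1; simp at hq1
  have hrhead : q.dropLast.head hrne = g k := by
    have h6 := congrArg List.head? hqdec
    rw [List.head?_append, List.head?_eq_head hrne, hq2] at h6
    exact Option.some_inj.mp h6
  have hcy := hcyc q.dropLast hrne
  rw [cycle_eq c q.dropLast hrne, hrhead, hqdec] at hcy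
  linarith

/-- For a WEF-able allocation of m items, every path in the weighted envy graph
costs at most m·V/w₁, and the total minimal subsidy ∑ wᵢ·ℓᵢ is at most
(W/w₁ − 1)·m·V. -/
theorem path_cost_and_total_subsidy_bound {n m : ℕ}
    (w : Fin (n + 1) → ℝ) (hw : ∀ i, 0 < w i) (hmono : Monotone w)
    (val : Fin (n + 1) → Fin m → ℝ) (h0 : ∀ i o, 0 ≤ val i o)
    (V : ℝ) (hV : ∀ i o, val i o ≤ V)
    (A : Fin (n + 1) → Finset (Fin m))
    (hdisj : ∀ i j, i ≠ j → Disjoint (A i) (A j))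
    (v : Fin (n + 1) → Fin (n + 1) → ℝ)
    (hv : ∀ i j, v i j = ∑ o ∈ A j, val i o)
    (hcyc : ∀ c : List (Fin (n + 1)), c ≠ [] → cycleCost (envyCost v w) c ≤ 0)
    (ℓ : Fin (n + 1) → ℝ)
    (hℓ : ∀ i, IsGreatest (pathCostsFrom (envyCost v w) i) (ℓ i)) :
    (∀ p : List (Fin (n + 1)), p.Nodup → pathCost (envyCost v w) p ≤ m * V / w 0) ∧
    ∑ i, w i * ℓ i ≤ ((∑ i, w i) / w 0 - 1) * (m * V) := by
  have hw0 : 0 < w 0 := hw 0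
  rcases Nat.eq_zero_or_pos m with hm | hm
  · -- m = 0 : everything is zero
    subst hm
    have hA : ∀ j, A j = ∅ := fun j => Finset.eq_empty_of_isEmpty _
    have hv0 : ∀ i j, v i j = 0 := by intro i j; rw [hv, hA]; simp
    have hc0 : ∀ i j, envyCost v w i j = 0 := by
      intro i j; unfold envyCost; rw [hv0, hv0]; simp
    have hpc0 : ∀ p : List (Fin (n+1)), pathCost (envyCost v w) p = 0 := by
      intro p
      unfold pathCost
      apply List.sum_eq_zero
      intro x hx
      simp only [List.mem_map] at hx
      obtain ⟨q, _, rfl⟩ := hx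
      exact hc0 q.1 q.2
    have hℓ0 : ∀ i, ℓ i = 0 := by
      intro i
      obtain ⟨p, _, _, _, h4⟩ := (hℓ i).1
      rw [← h4, hpc0]
    constructor
    · intro p _
      rw [hpc0]
      simp
    · simp only [hℓ0, mul_zero, Finset.sum_const_zero, Nat.cast_zero, zero_mul, mul_zero]
      exact le_refl 0
  · -- m ≥ 1
    have hVnn : 0 ≤ V := le_trans (h0 0 ⟨0, hm⟩) (hV 0 ⟨0, hm⟩)
    have hvub : ∀ i j, v i j ≤ (A j).card * V := by
      intro i j
      rw [hv]
      calc ∑ o ∈ A j, val i o ≤ ∑ _o ∈ A j, V := Finset.sum_le_sum fun o _ => hV i o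
        _ = (A j).card * V := by rw [Finset.sum_const, nsmul_eq_mul]
    have hvnn : ∀ i j, 0 ≤ v i j := by
      intro i j; rw [hv]; exact Finset.sum_nonneg fun o _ => h0 i o
    have hedge : ∀ i j, envyCost v w i j ≤ (A j).card * V / w 0 := by
      intro i j
      unfold envyCost
      have h1 : v i j / w j ≤ v i j / w 0 :=
        div_le_div_of_nonneg_left (hvnn i j) hw0 (hmono (Fin.zero_le j))
      have h2 : v i j / w 0 ≤ (A j).card * V / w 0 :=
        (div_le_div_iff_of_pos_right hw0).mpr (hvub i j)
      have h3 : 0 ≤ v i i / w i := div_nonneg (hvnn i i) (hw i).le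
      linarith
    have hcard : ∀ S : Finset (Fin (n+1)), ∑ j ∈ S, (A j).card ≤ m := by
      intro S
      calc ∑ j ∈ S, (A j).card = (S.biUnion A).card :=
            (Finset.card_biUnion fun i _ j _ hij => hdisj i j hij).symm
        _ ≤ (Finset.univ : Finset (Fin m)).card := Finset.card_le_card (Finset.subset_univ _)
        _ = m := by simp
    have hpath : ∀ p : List (Fin (n+1)), p.Nodup → pathCost (envyCost v w) p ≤ m * V / w 0 := by
      intro p hp
      have hb : pathCost (envyCost v w) p ≤
          ((p.zip p.tail).map fun q => ((A q.2).card : ℝ) * V / w 0).sum := by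
        unfold pathCost
        apply List.sum_le_sum
        intro q _
        exact hedge q.1 q.2
      have hmap : ((p.zip p.tail).map fun q => ((A q.2).card : ℝ) * V / w 0) =
          p.tail.map fun j => ((A j).card : ℝ) * V / w 0 := by
        have : (p.zip p.tail).map (fun q => ((A q.2).card : ℝ) * V / w 0) =
            ((p.zip p.tail).map Prod.snd).map (fun j => ((A j).card : ℝ) * V / w 0) := by
          rw [List.map_map]; rfl
        rw [this, List.map_snd_zip (show p.tail.length ≤ p.length by cases p <;> simp)]
      rw [hmap] at hb
      have hnd : p.tail.Nodup := hp.sublist (List.tail_sublist p)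
      have hsum : (p.tail.map fun j => ((A j).card : ℝ) * V / w 0).sum =
          ∑ j ∈ p.tail.toFinset, ((A j).card : ℝ) * V / w 0 :=
        (List.sum_toFinset _ hnd).symm
      have hfin : ∑ j ∈ p.tail.toFinset, ((A j).card : ℝ) * V / w 0 ≤ m * V / w 0 := by
        have h1 : ∑ j ∈ p.tail.toFinset, ((A j).card : ℝ) * V / w 0 =
            ((∑ j ∈ p.tail.toFinset, (A j).card : ℕ) : ℝ) * (V / w 0) := by
          push_cast
          rw [Finset.sum_mul]
          exact Finset.sum_congr rfl fun j _ => by rw [mul_div_assoc]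
        rw [h1]
        have h2 : ((∑ j ∈ p.tail.toFinset, (A j).card : ℕ) : ℝ) ≤ (m : ℝ) := by
          exact_mod_cast hcard _
        calc _ ≤ (m : ℝ) * (V / w 0) :=
              mul_le_mul_of_nonneg_right h2 (div_nonneg hVnn hw0.le)
          _ = m * V / w 0 := by rw [mul_div_assoc]
      linarith
    refine ⟨hpath, ?_⟩
    have hub : ∀ i, ℓ i ≤ m * V / w 0 := by
      intro i
      obtain ⟨p, _, h2, _, h4⟩ := (hℓ i).1
      rw [← h4]
      exact hpath p h2
    have hlb : ∀ i, 0 ≤ ℓ i := by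
      intro i
      exact (hℓ i).2 ⟨[i], by simp, by simp, by simp, pc_single _ _⟩
    obtain ⟨i₀, hi₀⟩ := exists_ell_le_zero (envyCost v w) hcyc ℓ hℓ
    have hℓi0 : ℓ i₀ = 0 := le_antisymm hi₀ (hlb i₀)
    have hstep : ∑ i, w i * ℓ i = ∑ i ∈ Finset.univ.erase i₀, w i * ℓ i := by
      rw [← Finset.sum_erase_add _ _ (Finset.mem_univ i₀), hℓi0]
      simp
    rw [hstep]
    have h4 : ∑ i ∈ Finset.univ.erase i₀, w i * ℓ i ≤
        (∑ i ∈ Finset.univ.erase i₀, w i) * (m * V / w 0) := by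
      rw [Finset.sum_mul]
      exact Finset.sum_le_sum fun i _ => mul_le_mul_of_nonneg_left (hub i) (hw i).le
    have h5 : ∑ i ∈ Finset.univ.erase i₀, w i = (∑ i, w i) - w i₀ := by
      rw [← Finset.sum_erase_add _ _ (Finset.mem_univ i₀)]
      ring
    have h6 : (∑ i, w i) - w i₀ ≤ (∑ i, w i) - w 0 := by
      have := hmono (Fin.zero_le i₀)
      linarith
    have h7 : 0 ≤ m * V / w 0 := div_nonneg (by positivity) hw0.le
    calc ∑ i ∈ Finset.univ.erase i₀, w i * ℓ i
        ≤ (∑ i ∈ Finset.univ.erase i₀, w i) * (m * V / w 0) := h4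
      _ ≤ ((∑ i, w i) - w 0) * (m * V / w 0) := by
          rw [h5]
          exact mul_le_mul_of_nonneg_right h6 h7
      _ = ((∑ i, w i) / w 0 - 1) * (m * V) := by
          field_simp
end

section
/- Lower bound for chosen allocations: for any weight vector with w_1 = min_i w_i, there is an instance (one item valued V by agent 1 and V−ε by all others, all other items worthless) in which every WEF-able allocation gives the item to agent 1, and the minimum total subsidy for a WEF solution is at least (W/w_1 − 1)(V−ε). -/
/-- Lower bound when the allocation can be chosen: with a single item valued V
by agent 0 and V−ε by everyone else, every WEF-able allocation gives the item
to agent 0, and then the total subsidy is at least (W/w₁ − 1)(V−ε). -/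
theorem chosen_allocation_subsidy_lower_bound {n : ℕ}
    (w : Fin (n + 2) → ℝ) (hw : ∀ i, 0 < w i) (hmono : Monotone w)
    (V ε : ℝ) (hε : 0 < ε) (hεV : ε < V)
    (val : Fin (n + 2) → ℝ) (hval : ∀ i, val i = if i = 0 then V else V - ε) :
    (∀ h : Fin (n + 2),
      (∃ s : Fin (n + 2) → ℝ, (∀ i, 0 ≤ s i) ∧
        IsWEF (fun i j => if j = h then val i else 0) w s) → h = 0) ∧
    (∀ s : Fin (n + 2) → ℝ, (∀ i, 0 ≤ s i) →
      IsWEF (fun i j => if j = (0 : Fin (n + 2)) then val i else 0) w s →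
      ((∑ i, w i) / w 0 - 1) * (V - ε) ≤ ∑ i, s i) := by

  constructor
  · rintro h ⟨s, hs, hwef⟩
    by_contra hh
    have h1 := hwef 0 h
    have h2 := hwef h 0
    have hne : (0 : Fin (n+2)) ≠ h := fun e => hh e.symm
    simp only [if_pos rfl, if_neg hne, if_neg hh, hval, zero_add] at h1 h2
    have hwh := hw h
    have : V + s h ≤ (V - ε) + s h := by
      have := h1.trans h2
      exact (div_le_div_iff_of_pos_right hwh).mp this
    linarith
  · intro s hs hwef
    have hw0 := hw 0
    have key : ∀ i : Fin (n+2), i ≠ 0 → w i * (V - ε) / w 0 ≤ s i := by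
      intro i hi
      have h := hwef i 0
      simp only [if_pos rfl, if_neg hi, hval, zero_add] at h
      have hwi := hw i
      have h1 : (V - ε) / w 0 ≤ s i / w i := by
        calc (V - ε) / w 0 ≤ (V - ε + s 0) / w 0 := by
              gcongr; exact le_add_of_nonneg_right (hs 0)
            _ ≤ s i / w i := h
      calc w i * (V - ε) / w 0 = w i * ((V - ε) / w 0) := by ring
        _ ≤ w i * (s i / w i) := by gcongr
        _ = s i := by field_simp
    have hsum : ∑ i, (if i = 0 then (0:ℝ) else w i * (V - ε) / w 0) ≤ ∑ i, s i := by
      apply Finset.sum_le_sum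
      intro i _
      by_cases hi : i = 0
      · simp [hi, hs 0]
      · simp [hi, key i hi]
    have heq : ∑ i, (if i = 0 then (0:ℝ) else w i * (V - ε) / w 0)
        = ((∑ i, w i) / w 0 - 1) * (V - ε) := by
      have h1 : ∑ i, (if i = 0 then (0:ℝ) else w i * (V - ε) / w 0)
          = (∑ i, w i * (V - ε) / w 0) - w 0 * (V - ε) / w 0 := by
        rw [eq_sub_iff_add_eq]
        have h2 : w 0 * (V - ε) / w 0
            = ∑ i, (if i = 0 then w i * (V - ε) / w 0 else 0) := by
          rw [Finset.sum_ite_eq' Finset.univ (0 : Fin (n+2))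
            (fun i => w i * (V - ε) / w 0)]
          simp
        rw [h2, ← Finset.sum_add_distrib]
        apply Finset.sum_congr rfl
        intro i _
        by_cases hi : i = 0 <;> simp [hi]
      rw [h1, ← Finset.sum_div, ← Finset.sum_mul]
      field_simp
    linarith
end

section
/- Minimum-cost lemma: let A be a WEF-able allocation and z > 0; if cost_A(i,k) ≥ −z for every ordered pair (i,k) of distinct agents, then ℓ_i(A) ≤ z for every agent i, hence the minimal subsidy of agent i is at most w_i·z. -/
/-- Minimum-cost lemma: if every edge of the weighted envy graph of a WEF-able
allocation costs at least −z, then ℓᵢ ≤ z, hence the minimal subsidy of agent i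
is at most wᵢ·z. -/
theorem min_cost_subsidy_lemma {n : ℕ}
    (w : Fin n → ℝ) (hw : ∀ i, 0 < w i)
    (v : Fin n → Fin n → ℝ)
    (hcyc : ∀ c : List (Fin n), c ≠ [] → cycleCost (envyCost v w) c ≤ 0)
    (z : ℝ) (hz : 0 < z)
    (hedge : ∀ i k, i ≠ k → -z ≤ envyCost v w i k)
    (ℓ : Fin n → ℝ)
    (hℓ : ∀ i, IsGreatest (pathCostsFrom (envyCost v w) i) (ℓ i)) :
    ∀ i, ℓ i ≤ z ∧ w i * ℓ i ≤ w i * z := by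
  have key : ∀ i, ℓ i ≤ z := by
    intro i
    obtain ⟨⟨p, hne, hnd, hhd, hpc⟩, _⟩ := hℓ i
    obtain ⟨t, rfl⟩ : ∃ t, p = i :: t := by
      cases p with
      | nil => simp at hhd
      | cons a t => exact ⟨t, by simpa using congrArg (Option.getD · i) hhd⟩
    cases t with
    | nil =>
      have : ℓ i = 0 := by simp [← hpc, pathCost]
      linarith
    | cons b t =>
      set p := i :: b :: t with hp
      set j := p.getLast (by simp [hp]) with hj
      have hji : j ≠ i := by
        have hmem : j ∈ b :: t := by
          have : j = (b :: t).getLast (by simp) := by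
            simp [hj, hp, List.getLast_cons]
          rw [this]; exact List.getLast_mem _
        intro h
        have := (List.nodup_cons.mp hnd).1
        exact this (h ▸ hmem)
      have hcyceq : cycleCost (envyCost v w) p
          = pathCost (envyCost v w) p + envyCost v w j i := by
        have hrot : p.rotate 1 = (b :: t) ++ [i] := by
          simp [hp, List.rotate_cons_succ, List.rotate_zero]
        have hzip : p.zip (p.rotate 1) = p.zip p.tail ++ [(j, i)] := by
          rw [hrot]
          have : ∀ (l : List (Fin n)) (a x : Fin n),
              (a :: l).zip (l ++ [x])
                = (a :: l).zip l ++ [((a :: l).getLast (by simp), x)] := by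
            intro l
            induction l with
            | nil => intro a x; simp
            | cons c l ih =>
              intro a x
              simp only [List.zip_cons_cons, List.cons_append]
              rw [ih c x]
              simp [List.getLast_cons]
          have hjl : j = (b :: t).getLast (by simp) := by simp [hj, hp, List.getLast_cons]
          rw [hjl]
          simpa [hp] using this (b :: t) i i
        simp [cycleCost, pathCost, hzip]
      have h1 : cycleCost (envyCost v w) p ≤ 0 := hcyc p (by simp [hp])
      have h2 : -z ≤ envyCost v w j i := hedge j i hji
      have : pathCost (envyCost v w) p = ℓ i := hpc
      linarith [hcyceq ▸ h1]
  intro i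
  exact ⟨key i, mul_le_mul_of_nonneg_left (key i) (hw i).le⟩
end

section
/- With identical additive valuations, every allocation is weighted-envy-freeable: every directed cycle in the weighted envy graph has total cost exactly 0. -/
lemma sum_zip_sub {α : Type*} (f : α → ℝ) :
    ∀ (l₁ l₂ : List α), l₁.length = l₂.length →
      ((l₁.zip l₂).map fun q => f q.2 - f q.1).sum = (l₂.map f).sum - (l₁.map f).sum := by
  intro l₁
  induction l₁ with
  | nil => intro l₂ h; simp [List.length_eq_zero_iff.mp h.symm]
  | cons a t ih =>
    intro l₂ h
    cases l₂ with
    | nil => simp at h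
    | cons b t₂ =>
      simp only [List.zip_cons_cons, List.map_cons, List.sum_cons]
      rw [ih t₂ (by simpa using h)]
      ring

/-- With identical valuations every allocation is WEF-able:
every directed cycle in the weighted envy graph costs exactly 0. -/
theorem identical_valuations_every_allocation_wefable {n : ℕ}
    (w : Fin n → ℝ) (hw : ∀ i, 0 < w i) (u : Fin n → ℝ) :
    (∀ c : List (Fin n), c ≠ [] →
        cycleCost (envyCost (fun _ k => u k) w) c = 0) ∧
    (∃ s : Fin n → ℝ, (∀ i, 0 ≤ s i) ∧ IsWEF (fun _ k => u k) w s) := by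
  constructor
  · intro c _
    have hlen : c.length = (c.rotate 1).length := by simp
    have : cycleCost (envyCost (fun _ k => u k) w) c
        = (((c.rotate 1).map fun i => u i / w i).sum) - ((c.map fun i => u i / w i).sum) := by
      unfold cycleCost envyCost
      exact sum_zip_sub (fun i => u i / w i) c (c.rotate 1) hlen
    rw [this, ((c.rotate_perm 1).map fun i => u i / w i).sum_eq, sub_self]
  · rcases Nat.eq_zero_or_pos n with hn | hn
    · refine ⟨fun i => 0, fun i => le_refl _, fun i j => ?_⟩
      exact absurd i.2 (by omega)
    have hne : (Finset.univ : Finset (Fin n)).Nonempty := ⟨⟨0, hn⟩, Finset.mem_univ _⟩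
    set M : ℝ := Finset.univ.sup' hne (fun j => u j / w j) with hM
    refine ⟨fun i => M * w i - u i, fun i => ?_, fun i j => ?_⟩
    · have h1 : u i / w i ≤ M := Finset.le_sup' (fun j => u j / w j) (Finset.mem_univ i)
      have h2 := (div_le_iff₀ (hw i)).mp h1
      simp only [sub_nonneg]
      linarith
    · have hkey : ∀ k, (u k + (M * w k - u k)) / w k = M := by
        intro k
        rw [add_sub_cancel, mul_div_assoc, div_self (hw k).ne', mul_one]
      rw [hkey i, hkey j]
end

section
/- With identical additive valuations, if an allocation A is WEF(0,1), then the maximum path cost satisfies ℓ_i(A) ≤ V/w_i for every agent i, where V is the maximum single-item value; hence the minimal subsidy of each agent is at most w_i·(V/w_i) = V, and the total subsidy is at most (n−1)V. -/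
/-- Telescoping: the cost of a path under a potential-difference cost equals the
difference of potentials at the endpoints. -/
lemma pathCost_telescope {n : ℕ} (f : Fin n → ℝ) :
    ∀ (p : List (Fin n)) (h : p ≠ []),
      pathCost (fun a b => f b - f a) p = f (p.getLast h) - f (p.head h) := by
  intro p
  induction p with
  | nil => intro h; simp at h
  | cons a t ih =>
    intro h
    cases t with
    | nil => simp [pathCost]
    | cons b t' =>
      have h2 : (b :: t') ≠ [] := by simp
      have := ih h2
      simp only [pathCost, List.zip_cons_cons, List.tail_cons, List.map_cons,
        List.sum_cons] at this ⊢
      rw [this]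
      simp [List.getLast_cons]

/-- With identical additive valuations, a WEF(0,1) allocation has ℓᵢ ≤ V/wᵢ
for every agent, hence a per-agent subsidy of at most V and a total subsidy
of at most (n−1)·V. -/
theorem identical_wef01_subsidy_bound {n m : ℕ}
    (w : Fin (n + 1) → ℝ) (hw : ∀ i, 0 < w i)
    (val : Fin m → ℝ) (h0 : ∀ o, 0 ≤ val o)
    (V : ℝ) (hVpos : 0 ≤ V) (hV : ∀ o, val o ≤ V)
    (A : Fin (n + 1) → Finset (Fin m))
    (u : Fin (n + 1) → ℝ) (hu : ∀ j, u j = ∑ o ∈ A j, val o)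
    (hWEF01 : ∀ i j : Fin (n + 1), ∃ B ⊆ A j, B.card ≤ 1 ∧
      u j / w j ≤ (u i + ∑ o ∈ B, val o) / w i)
    (ℓ : Fin (n + 1) → ℝ)
    (hℓ : ∀ i, IsGreatest (pathCostsFrom (envyCost (fun _ k => u k) w) i) (ℓ i)) :
    (∀ i, ℓ i ≤ V / w i) ∧ (∀ i, w i * ℓ i ≤ V) ∧
      ∑ i, w i * ℓ i ≤ n * V := by
  set f : Fin (n + 1) → ℝ := fun k => u k / w k with hf
  -- the key WEF(0,1) bound
  have hub : ∀ i j : Fin (n + 1), f j - f i ≤ V / w i := by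
    intro i j
    obtain ⟨B, hB, hcard, hle⟩ := hWEF01 i j
    have hsum : (∑ o ∈ B, val o) ≤ V := by
      calc (∑ o ∈ B, val o) ≤ B.card • V :=
            Finset.sum_le_card_nsmul B _ V (fun o _ => hV o)
        _ = (B.card : ℝ) * V := by simp [nsmul_eq_mul]
        _ ≤ 1 * V := by
            apply mul_le_mul_of_nonneg_right _ hVpos
            exact_mod_cast hcard
        _ = V := one_mul V
    have : u j / w j ≤ (u i + V) / w i := by
      refine le_trans hle ?_
      gcongr
      all_goals linarith [hw i]
    have h2 : (u i + V) / w i = u i / w i + V / w i := add_div _ _ _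
    simp only [hf]
    linarith [h2 ▸ this]
  -- envyCost equals the potential-difference cost
  have hc : envyCost (fun _ k => u k) w = fun a b => f b - f a := rfl
  -- each ℓ i equals f j - f i for some j
  have hform : ∀ i, ∃ j, ℓ i = f j - f i := by
    intro i
    obtain ⟨⟨p, hne, _, hhead, hcost⟩, _⟩ := hℓ i
    refine ⟨p.getLast hne, ?_⟩
    have hh : p.head hne = i := by
      have := List.head?_eq_head hne
      rw [hhead] at this
      exact (Option.some_injective _ this.symm)
    rw [← hcost, hc, pathCost_telescope f p hne, hh]
  have h1 : ∀ i, ℓ i ≤ V / w i := by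
    intro i
    obtain ⟨j, hj⟩ := hform i
    rw [hj]; exact hub i j
  have h2 : ∀ i, w i * ℓ i ≤ V := by
    intro i
    have := mul_le_mul_of_nonneg_left (h1 i) (hw i).le
    rwa [mul_div_cancel₀ V (hw i).ne'] at this
  refine ⟨h1, h2, ?_⟩
  -- pick the maximizer of f: its ℓ is ≤ 0
  obtain ⟨i₀, -, hi₀⟩ := Finset.exists_max_image Finset.univ f ⟨0, Finset.mem_univ 0⟩
  have hℓ0 : ℓ i₀ ≤ 0 := by
    obtain ⟨j, hj⟩ := hform i₀
    rw [hj]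
    have := hi₀ j (Finset.mem_univ j)
    linarith
  have hw0 : w i₀ * ℓ i₀ ≤ 0 := mul_nonpos_of_nonneg_of_nonpos (hw i₀).le hℓ0
  calc ∑ i, w i * ℓ i
      = w i₀ * ℓ i₀ + ∑ i ∈ Finset.univ.erase i₀, w i * ℓ i :=
        (Finset.add_sum_erase _ _ (Finset.mem_univ i₀)).symm
    _ ≤ 0 + ∑ i ∈ Finset.univ.erase i₀, w i * ℓ i := by linarith
    _ ≤ 0 + (Finset.univ.erase i₀).card • V :=
        add_le_add_right (Finset.sum_le_card_nsmul _ _ V (fun i _ => h2 i)) 0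
    _ = n * V := by
        simp [Finset.card_erase_of_mem, nsmul_eq_mul]
end

section
/- Lower bound for binary valuations: for n ≥ 2 agents with weights w_1 ≤ w_2 ≤ ... ≤ w_n and a single item valued 1 by agents 1 and 2 and 0 by all others, any weighted-envy-free solution (allocation plus nonnegative subsidies) requires total subsidy at least W/w_2 − 1, where W = Σ_i w_i. -/
/-- Lower bound for binary valuations: with one item valued 1 by agents 0 and 1
(the two smallest-weight agents) and 0 by everyone else, any WEF solution
requires total subsidy at least W/w₂ − 1. -/
theorem binary_lower_bound {n : ℕ}
    (w : Fin (n + 2) → ℝ) (hw : ∀ i, 0 < w i) (hmono : Monotone w)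
    (val : Fin (n + 2) → ℝ)
    (hval : ∀ i, val i = if i = 0 ∨ i = 1 then (1 : ℝ) else 0) :
    ∀ h : Fin (n + 2), ∀ s : Fin (n + 2) → ℝ, (∀ i, 0 ≤ s i) →
      IsWEF (fun i j => if j = h then val i else 0) w s →
      (∑ i, w i) / w 1 - 1 ≤ ∑ i, s i := by
  intro h s hs hwef
  have Wpos : 0 < ∑ i, w i := Finset.sum_pos (fun i _ => hw i) ⟨0, Finset.mem_univ 0⟩
  by_cases hh : h = 0 ∨ h = 1
  · have main : ∀ k : Fin (n+2), k ≠ h → val k = 1 →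
        (∑ i, w i) / w h - 1 ≤ ∑ i, s i := by
      intro k hkh hvk
      have e2 := hwef k h
      simp only [if_pos rfl, if_neg hkh, hvk] at e2
      have key : ∀ i : Fin (n+2), (if i = h then (0:ℝ) else w i / w h) ≤ s i := by
        intro i
        by_cases hi : i = h
        · simpa [hi] using hs h
        · rw [if_neg hi]
          have e1 := hwef i k
          simp only [if_neg hkh, if_neg hi] at e1
          have h3 : 1 / w h ≤ s i / w i := by
            have h4 : 1 / w h ≤ (1 + s h) / w h := by
              have h5 := hs h
              have h6 := hw h
              gcongr <;> linarith
            calc 1 / w h ≤ (1 + s h) / w h := h4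
              _ ≤ (0 + s k) / w k := e2
              _ ≤ (0 + s i) / w i := e1
              _ = s i / w i := by ring_nf
          rw [div_le_div_iff₀ (hw h) (hw i)] at h3
          rw [div_le_iff₀ (hw h)]
          linarith
      have sum1 : ∑ i, (if i = h then (0:ℝ) else w i / w h) ≤ ∑ i, s i :=
        Finset.sum_le_sum fun i _ => key i
      have sum2 : ∑ i, (if i = h then (0:ℝ) else w i / w h)
          = (∑ i, w i) / w h - 1 := by
        have hrw : ∀ i : Fin (n+2), (if i = h then (0:ℝ) else w i / w h)
            = w i / w h - (if i = h then 1 else 0) := by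
          intro i; by_cases hi : i = h <;> simp [hi, div_self (hw h).ne']
        simp only [hrw]
        rw [Finset.sum_sub_distrib, ← Finset.sum_div]
        simp [Finset.sum_ite_eq']
      linarith
    have hwh : w h ≤ w 1 := by
      rcases hh with rfl | rfl
      · exact hmono (Fin.zero_le 1)
      · exact le_refl _
    have hkh : ∃ k : Fin (n+2), k ≠ h ∧ val k = 1 := by
      rcases hh with rfl | rfl
      · exact ⟨1, one_ne_zero, by simp [hval]⟩
      · exact ⟨0, by simp, by simp [hval]⟩
    obtain ⟨k, hk1, hk2⟩ := hkh
    have hdiv : (∑ i, w i) / w 1 ≤ (∑ i, w i) / w h := by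
      gcongr
      exact hw h
    linarith [main k hk1 hk2]
  · push_neg at hh
    exfalso
    have h0 : (0 : Fin (n+2)) ≠ h := fun e => hh.1 e.symm
    have e1 := hwef 0 h
    have e2 := hwef h 0
    simp only [if_pos rfl, if_neg h0] at e1 e2
    have hv0 : val 0 = 1 := by simp [hval]
    have hvh : val h = 0 := by simp [hval, hh.1, hh.2]
    rw [hv0] at e1
    rw [hvh] at e2
    have := (div_le_div_iff_of_pos_right (hw h)).mp (le_trans e1 e2)
    simp at this
    linarith
end

section
/- With binary additive valuations, every non-redundant allocation (one where v_i(A_i) = |A_i| for all i) is weighted-envy-freeable: every cycle in the weighted envy graph has nonpositive total cost. -/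
/-- With binary additive valuations, every non-redundant allocation is
WEF-able: every cycle in the weighted envy graph has nonpositive cost. -/
theorem nonredundant_binary_wefable {n m : ℕ}
    (w : Fin n → ℝ) (hw : ∀ i, 0 < w i)
    (val : Fin n → Fin m → ℝ) (hbin : ∀ i o, val i o = 0 ∨ val i o = 1)
    (A : Fin n → Finset (Fin m))
    (hnr : ∀ i, ∑ o ∈ A i, val i o = (A i).card)
    (v : Fin n → Fin n → ℝ) (hv : ∀ i j, v i j = ∑ o ∈ A j, val i o) :
    (∀ c : List (Fin n), c ≠ [] → cycleCost (envyCost v w) c ≤ 0) ∧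
    (∃ s : Fin n → ℝ, (∀ i, 0 ≤ s i) ∧ IsWEF v w s) := by

  have hvle : ∀ i j, v i j ≤ v j j := by
    intro i j
    rw [hv i j, hv j j, hnr j]
    calc ∑ o ∈ A j, val i o ≤ ∑ o ∈ A j, (1:ℝ) := by
          apply Finset.sum_le_sum
          intro o _
          rcases hbin i o with h | h <;> simp [h]
      _ = (A j).card := by simp
  set f : Fin n → ℝ := fun k => v k k / w k with hf
  have hedge : ∀ i j, envyCost v w i j ≤ f j - f i := by
    intro i j
    unfold envyCost
    simp only [hf]
    have h1 : v i j / w j ≤ v j j / w j := by gcongr <;> first | exact (hw j).le | exact hvle i j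
    linarith
  have hcyc : ∀ c : List (Fin n), c ≠ [] → cycleCost (envyCost v w) c ≤ 0 := by
    intro p _
    unfold cycleCost
    have hlen : (p.rotate 1).length = p.length := p.length_rotate 1
    have h1 : ((p.zip (p.rotate 1)).map fun q => envyCost v w q.1 q.2).sum
        ≤ ((p.zip (p.rotate 1)).map fun q => f q.2 - f q.1).sum := by
      apply List.sum_le_sum
      intro q _
      exact hedge q.1 q.2
    have h2 : ((p.zip (p.rotate 1)).map fun q => f q.2 - f q.1).sum
        = ((p.zip (p.rotate 1)).map fun q => f q.2).sum
          - ((p.zip (p.rotate 1)).map fun q => f q.1).sum := by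
      induction (p.zip (p.rotate 1)) with
      | nil => simp
      | cons a l ih => simp [ih]; ring
    have h3 : ((p.zip (p.rotate 1)).map fun q => f q.2).sum = ((p.rotate 1).map f).sum := by
      rw [show ((p.zip (p.rotate 1)).map fun q => f q.2)
          = ((p.zip (p.rotate 1)).map Prod.snd).map f by simp [List.map_map, Function.comp]]
      rw [List.map_snd_zip (l₁ := p) (l₂ := p.rotate 1) hlen.le]
    have h4 : ((p.zip (p.rotate 1)).map fun q => f q.1).sum = (p.map f).sum := by
      rw [show ((p.zip (p.rotate 1)).map fun q => f q.1)
          = ((p.zip (p.rotate 1)).map Prod.fst).map f by simp [List.map_map, Function.comp]]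
      rw [List.map_fst_zip (l₁ := p) (l₂ := p.rotate 1) hlen.ge]
    have h5 : ((p.rotate 1).map f).sum = (p.map f).sum :=
      ((p.rotate_perm 1).map f).sum_eq
    linarith
  refine ⟨hcyc, ?_⟩
  rcases Nat.eq_zero_or_pos n with hn | hn
  · subst hn
    exact ⟨fun i => i.elim0, fun i => i.elim0, fun i => i.elim0⟩
  · obtain ⟨k, -, hk⟩ := Finset.exists_max_image Finset.univ f ⟨⟨0, hn⟩, Finset.mem_univ _⟩
    set M : ℝ := f k with hM
    refine ⟨fun j => w j * (M - f j), ?_, ?_⟩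
    · intro i
      have : f i ≤ M := hk i (Finset.mem_univ i)
      have := (hw i).le
      dsimp only
      nlinarith
    · intro i j
      have hdiag : ∀ i, (v i i + w i * (M - f i)) / w i = M := by
        intro i
        rw [add_div, mul_div_cancel_left₀ _ (ne_of_gt (hw i))]
        simp [hf]
      have hoff : (v i j + w j * (M - f j)) / w j ≤ M := by
        rw [add_div, mul_div_cancel_left₀ _ (ne_of_gt (hw j))]
        have h1 : v i j / w j ≤ v j j / w j := by
          gcongr <;> first | exact (hw j).le | exact hvle i j
        have h2 : f j = v j j / w j := rfl
        linarith
      rw [hdiag i]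
      exact hoff
end

section
/- For identical additive valuations, the total subsidy lower bound (n−1)V is attained: with integer weights w_1 ≤ ... ≤ w_n and m = 1 + Σ_i (w_i − 1) items each of common value V, any weighted-envy-free solution (allocation of the items plus nonnegative subsidies) requires total subsidy at least (n−1)V. -/
/-- Tightness for identical valuations: with integer weights and
m = 1 + ∑ (wᵢ − 1) items each of common value V > 0, any weighted-envy-free
solution requires total subsidy at least (n−1)·V. -/
theorem identical_tight_lower_bound {n : ℕ}
    (w : Fin (n + 1) → ℕ) (hw : ∀ i, 1 ≤ w i)
    (V : ℝ) (hV : 0 < V)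
    (A : Fin (n + 1) → Finset (Fin (1 + ∑ i, (w i - 1))))
    (hdisj : ∀ i j, i ≠ j → Disjoint (A i) (A j))
    (hcomplete : ∀ o, ∃ i, o ∈ A i)
    (s : Fin (n + 1) → ℝ) (hs : ∀ i, 0 ≤ s i)
    (hWEF : IsWEF (fun _ j => (A j).card * V) (fun i => (w i : ℝ)) s) :
    (n : ℝ) * V ≤ ∑ i, s i := by
  have hwpos : ∀ i, (0:ℝ) < (w i : ℝ) := fun i => by exact_mod_cast (hw i)
  set r : ℝ := (((A 0).card : ℝ) * V + s 0) / (w 0 : ℝ) with hr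
  have h_eq : ∀ i, (((A i).card : ℝ) * V + s i) / (w i : ℝ) = r := fun i =>
    le_antisymm (hWEF 0 i) (hWEF i 0)
  -- total number of items
  have hcard : ∑ i, (A i).card = 1 + ∑ i, (w i - 1) := by
    have huniv : Finset.univ.biUnion A = Finset.univ := by
      ext o; simpa using hcomplete o
    calc ∑ i, (A i).card
        = (Finset.univ.biUnion A).card :=
          (Finset.card_biUnion (fun i _ j _ hij => hdisj i j hij)).symm
      _ = 1 + ∑ i, (w i - 1) := by rw [huniv]; simp
  have hex : ∃ i, w i ≤ (A i).card := by
    by_contra h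
    push_neg at h
    have hle : ∑ i, (A i).card ≤ ∑ i, (w i - 1) :=
      Finset.sum_le_sum fun i _ => Nat.le_pred_of_lt (h i)
    omega
  have hsub : ∀ i, s i = r * (w i : ℝ) - ((A i).card : ℝ) * V := by
    intro i
    have h := h_eq i
    rw [div_eq_iff (hwpos i).ne'] at h
    linarith
  obtain ⟨k, hk⟩ := hex
  have hrV : V ≤ r := by
    rw [← h_eq k, le_div_iff₀ (hwpos k)]
    have hk' : (w k : ℝ) ≤ ((A k).card : ℝ) := by exact_mod_cast hk
    nlinarith [hs k]
  have hsum : ∑ i, s i = r * (∑ i, (w i:ℝ)) - (∑ i, ((A i).card:ℝ)) * V := by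
    rw [Finset.mul_sum, Finset.sum_mul, ← Finset.sum_sub_distrib]
    exact Finset.sum_congr rfl fun i _ => hsub i
  have hW : ∑ i, (A i).card + n = ∑ i, w i := by
    have h1 : ∑ i : Fin (n+1), (w i - 1 + 1) = ∑ i, w i :=
      Finset.sum_congr rfl fun i _ => Nat.sub_add_cancel (hw i)
    rw [Finset.sum_add_distrib] at h1
    simp at h1
    omega
  have hWc : (∑ i, ((A i).card:ℝ)) + n = ∑ i, (w i : ℝ) := by exact_mod_cast hW
  have hWr : (0:ℝ) < ∑ i, (w i : ℝ) :=
    Finset.sum_pos (fun i _ => hwpos i) ⟨0, Finset.mem_univ 0⟩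
  rw [hsum]
  nlinarith [hrV, hWr]
end
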